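/- Let S₁,…,S_R be linear subspaces of ℝⁿ, S = ⋃ᵣ Sᵣ, and x* ∈ S with active index set I(x*) = {r : x* ∈ Sᵣ}. Then the Fréchet (regular) normal cone to S at x* equals ⋂_{r ∈ I(x*)} Sᵣ^⊥, the intersection of the orthogonal complements of the active subspaces. -/

import Mathlib

open Filter Topology Metric Set
open scoped Classical

noncomputable section

abbrev E (n : ℕ) := EuclideanSpace ℝ (Fin n)

/-- Bouligand tangent cone. -/
def bouligand {n : ℕ} (S : Set (E n)) (x : E n) : Set (E n) :=
  {d | ∃ t : ℕ → ℝ, ∃ dk : ℕ → E n,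
    (∀ k, 0 < t k) ∧ Tendsto t atTop (𝓝 0) ∧ Tendsto dk atTop (𝓝 d) ∧
    ∀ k, x + t k • dk k ∈ S}

/-- Fréchet (regular) normal cone. -/
def frechetNormal {n : ℕ} (S : Set (E n)) (x : E n) : Set (E n) :=
  {v | ∀ ε > (0 : ℝ), ∃ δ > (0 : ℝ), ∀ y ∈ S, ‖y - x‖ < δ →
    (inner ℝ v (y - x) : ℝ) ≤ ε * ‖y - x‖}

/-- Mordukhovich (limiting) normal cone. -/
def limitingNormal {n : ℕ} (S : Set (E n)) (x : E n) : Set (E n) :=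
  {v | ∃ xk : ℕ → E n, ∃ vk : ℕ → E n,
    (∀ k, xk k ∈ S) ∧ Tendsto xk atTop (𝓝 x) ∧
    (∀ k, vk k ∈ frechetNormal S (xk k)) ∧ Tendsto vk atTop (𝓝 v)}

/-- Directional limiting normal cone. -/
def dirLimitingNormal {n : ℕ} (S : Set (E n)) (x d : E n) : Set (E n) :=
  {v | ∃ t : ℕ → ℝ, ∃ dk : ℕ → E n, ∃ vk : ℕ → E n,
    (∀ k, 0 < t k) ∧ Tendsto t atTop (𝓝 0) ∧ Tendsto dk atTop (𝓝 d) ∧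
    Tendsto vk atTop (𝓝 v) ∧ ∀ k, vk k ∈ frechetNormal S (x + t k • dk k)}

theorem stmt3 {n R : ℕ} (V : Fin R → Submodule ℝ (E n))
    (x : E n) (hx : x ∈ ⋃ r, (V r : Set (E n))) :
    frechetNormal (⋃ r, (V r : Set (E n))) x
      = ⋂ r ∈ {r : Fin R | x ∈ V r}, ((V r)ᗮ : Set (E n)) := by
  ext v
  simp only [mem_iInter, SetLike.mem_coe, Set.mem_setOf_eq]
  constructor
  · intro hv r hr
    have key : ∀ u ∈ V r, (inner ℝ v u : ℝ) ≤ 0 := by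
      intro u hu
      by_cases h0 : u = 0
      · simp [h0]
      have hnorm : 0 < ‖u‖ := norm_pos_iff.mpr h0
      have : ∀ ε > (0:ℝ), (inner ℝ v u : ℝ) ≤ 0 + ε := by
        intro ε hε
        obtain ⟨δ, hδ, hδ'⟩ := hv (ε / ‖u‖) (by positivity)
        set t : ℝ := δ / (2 * ‖u‖) with ht
        have htpos : 0 < t := by positivity
        have hy : x + t • u ∈ ⋃ r, (V r : Set (E n)) :=
          mem_iUnion.mpr ⟨r, (V r).add_mem hr ((V r).smul_mem t hu)⟩
        have heq : (x + t • u) - x = t • u := by abel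
        have hdist : ‖(x + t • u) - x‖ < δ := by
          rw [heq, norm_smul, Real.norm_eq_abs, abs_of_pos htpos, ht]
          rw [div_mul_eq_mul_div, mul_comm]
          rw [div_lt_iff₀ (by positivity)]
          nlinarith
        have hineq := hδ' _ hy hdist
        rw [heq, real_inner_smul_right, norm_smul, Real.norm_eq_abs,
          abs_of_pos htpos] at hineq
        have : (inner ℝ v u : ℝ) ≤ ε := by
          have h2 : t * (inner ℝ v u : ℝ) ≤ t * ε := by
            calc t * (inner ℝ v u : ℝ) ≤ ε / ‖u‖ * (t * ‖u‖) := hineq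
            _ = t * ε := by field_simp
          exact le_of_mul_le_mul_left h2 htpos
        linarith
      linarith [le_of_forall_pos_le_add this]
    rw [Submodule.mem_orthogonal]
    intro u hu
    rw [real_inner_comm]
    have h1 := key u hu
    have h2 := key (-u) ((V r).neg_mem hu)
    rw [inner_neg_right] at h2
    linarith
  · intro hv ε hε
    have hRne : (Finset.univ : Finset (Fin R)).Nonempty := by
      obtain ⟨r, -⟩ := mem_iUnion.mp hx
      exact ⟨r, Finset.mem_univ r⟩
    set f : Fin R → ℝ := fun r => if x ∈ V r then 1 else Metric.infDist x (V r) with hf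
    have hfpos : ∀ r, 0 < f r := by
      intro r
      by_cases hxr : x ∈ V r
      · simp [hf, hxr]
      · simp only [hf, hxr, if_false]
        have hcl : IsClosed ((V r : Set (E n))) := (V r).closed_of_finiteDimensional
        have hne : ((V r : Set (E n))).Nonempty := ⟨0, (V r).zero_mem⟩
        rcases lt_or_eq_of_le (Metric.infDist_nonneg (s := (V r : Set (E n))) (x := x)) with h | h
        · exact h
        · exfalso
          exact hxr ((hcl.mem_iff_infDist_zero hne).mpr h.symm)
    refine ⟨Finset.univ.inf' hRne f, (Finset.lt_inf'_iff hRne).mpr fun r _ => hfpos r, ?_⟩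
    intro y hy hylt
    obtain ⟨r, hyr⟩ := mem_iUnion.mp hy
    have hxr : x ∈ V r := by
      by_contra hxr
      have h1 : Metric.infDist x (V r : Set (E n)) ≤ dist x y :=
        Metric.infDist_le_dist_of_mem hyr
      have h2 : f r ≤ ‖y - x‖ := by
        simp only [hf, hxr, if_false]
        rwa [dist_eq_norm, ← norm_neg, neg_sub] at h1
      have h3 := Finset.inf'_le f (Finset.mem_univ r)
      linarith
    have hz : (inner ℝ v (y - x) : ℝ) = 0 :=
      (Submodule.mem_orthogonal' _ _).mp (hv r hxr) _ ((V r).sub_mem hyr hxr)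
    rw [hz]
    positivity
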